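/- arXiv:1908.10447 — 2 statements merged into one kernel-verified Lean document; each statement's English description precedes it below -/
import Mathlib

section
/- Let φ = (φ_tot, φ_st) : a → b be an interconnection morphism of surjective submersions, i.e., a morphism with φ_st : a_st → b_st a diffeomorphism. Then the pullback φ* : Crl(b) → Crl(a) defined by φ*F := (Tφ_st)⁻¹ ∘ F ∘ φ_tot is a well-defined linear map, and for every F ∈ Crl(b), the pair (φ*F, F) belongs to Crl(φ). -/
open Manifold

theorem diffeo_mfderiv_apply_symm
    {E₂ : Type*} [NormedAddCommGroup E₂] [NormedSpace ℝ E₂]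
    {H₂ : Type*} [TopologicalSpace H₂] {I₂ : ModelWithCorners ℝ E₂ H₂}
    {Ast : Type*} [TopologicalSpace Ast] [ChartedSpace H₂ Ast]
    [IsManifold I₂ (⊤ : ℕ∞) Ast]
    {E₄ : Type*} [NormedAddCommGroup E₄] [NormedSpace ℝ E₄]
    {H₄ : Type*} [TopologicalSpace H₄] {I₄ : ModelWithCorners ℝ E₄ H₄}
    {Bst : Type*} [TopologicalSpace Bst] [ChartedSpace H₄ Bst]
    [IsManifold I₄ (⊤ : ℕ∞) Bst]
    (φst : Diffeomorph I₂ I₄ Ast Bst (⊤ : ℕ∞)) (x : Ast) (v : TangentSpace I₄ (φst x)) :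
    mfderiv I₂ I₄ (φst) x (mfderiv I₄ I₂ (φst.symm) (φst x) v) = v := by
  have hcomp : mfderiv I₄ I₄ (φst ∘ φst.symm) (φst x)
      = (mfderiv I₂ I₄ φst (φst.symm (φst x))).comp
        (mfderiv I₄ I₂ φst.symm (φst x)) :=
    mfderiv_comp (φst x) ((φst.mdifferentiable (by simp)) _)
      ((φst.symm.mdifferentiable (by simp)) _)
  have hid : (φst : Ast → Bst) ∘ φst.symm = id := by
    funext y; simp
  rw [hid, mfderiv_id] at hcomp
  have hx : φst.symm (φst x) = x := φst.symm_apply_apply x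
  rw [hx] at hcomp
  have := congrArg (fun (T : TangentSpace I₄ (φst x) →L[ℝ] TangentSpace I₄ (φst x)) => T v) hcomp
  exact this.symm

/-- For an interconnection morphism `φ = (φ_tot, φ_st) : a → b` of surjective
submersions (`φ_st` a diffeomorphism), the pullback
`φ*F = (Tφ_st)⁻¹ ∘ F ∘ φ_tot` is a well-defined linear map `Crl(b) → Crl(a)`,
and `(φ*F, F) ∈ Crl(φ)` for every `F ∈ Crl(b)`. -/
theorem interconnection_pullback_linear
    {E₁ : Type*} [NormedAddCommGroup E₁] [NormedSpace ℝ E₁]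
    {H₁ : Type*} [TopologicalSpace H₁] (I₁ : ModelWithCorners ℝ E₁ H₁)
    {Atot : Type*} [TopologicalSpace Atot] [ChartedSpace H₁ Atot]
    {E₂ : Type*} [NormedAddCommGroup E₂] [NormedSpace ℝ E₂]
    {H₂ : Type*} [TopologicalSpace H₂] (I₂ : ModelWithCorners ℝ E₂ H₂)
    {Ast : Type*} [TopologicalSpace Ast] [ChartedSpace H₂ Ast]
    [IsManifold I₂ (⊤ : ℕ∞) Ast]
    {E₃ : Type*} [NormedAddCommGroup E₃] [NormedSpace ℝ E₃]
    {H₃ : Type*} [TopologicalSpace H₃] (I₃ : ModelWithCorners ℝ E₃ H₃)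
    {Btot : Type*} [TopologicalSpace Btot] [ChartedSpace H₃ Btot]
    {E₄ : Type*} [NormedAddCommGroup E₄] [NormedSpace ℝ E₄]
    {H₄ : Type*} [TopologicalSpace H₄] (I₄ : ModelWithCorners ℝ E₄ H₄)
    {Bst : Type*} [TopologicalSpace Bst] [ChartedSpace H₄ Bst]
    [IsManifold I₄ (⊤ : ℕ∞) Bst]
    (pa : Atot → Ast) (hpa : ContMDiff I₁ I₂ (⊤ : ℕ∞) pa) (hpas : Function.Surjective pa)
    (hpasub : ∀ q, Function.Surjective (mfderiv I₁ I₂ pa q))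
    (pb : Btot → Bst) (hpb : ContMDiff I₃ I₄ (⊤ : ℕ∞) pb) (hpbs : Function.Surjective pb)
    (hpbsub : ∀ q, Function.Surjective (mfderiv I₃ I₄ pb q))
    (φtot : Atot → Btot) (hφtot : ContMDiff I₁ I₃ (⊤ : ℕ∞) φtot)
    (φst : Diffeomorph I₂ I₄ Ast Bst (⊤ : ℕ∞))
    (hcomm : ∀ q : Atot, φst (pa q) = pb (φtot q)) :
    ∃ L : (∀ r : Btot, TangentSpace I₄ (pb r)) →ₗ[ℝ]
        (∀ q : Atot, TangentSpace I₂ (pa q)),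
      (∀ (F : ∀ r : Btot, TangentSpace I₄ (pb r)) (q : Atot),
        L F q = mfderiv I₄ I₂ (φst.symm) (pb (φtot q)) (F (φtot q))) ∧
      (∀ (F : ∀ r : Btot, TangentSpace I₄ (pb r)) (q : Atot),
        mfderiv I₂ I₄ (φst) (pa q) (L F q) = F (φtot q)) := by
  refine ⟨{ toFun := fun F q => mfderiv I₄ I₂ (φst.symm) (pb (φtot q)) (F (φtot q))
            map_add' := ?_
            map_smul' := ?_ }, fun F q => rfl, ?_⟩
  · intro F G; funext q
    exact (mfderiv I₄ I₂ (φst.symm) (pb (φtot q))).map_add _ _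
  · intro c F; funext q
    exact (mfderiv I₄ I₂ (φst.symm) (pb (φtot q))).map_smul _ _
  · intro F q
    have h := hcomm q
    show mfderiv I₂ I₄ (φst) (pa q)
        (mfderiv I₄ I₂ (φst.symm) (pb (φtot q)) (F (φtot q))) = F (φtot q)
    rw [← h]
    exact diffeo_mfderiv_apply_symm φst (pa q) (F (φtot q))
end

section
/- Suppose f : a → c, g : b → d are maps of surjective submersions and φ : a → b, ψ : c → d are interconnection morphisms with f ∘ φ⁻¹-square commuting, i.e., ψ ∘ f = g ∘ φ as maps of submersions composed appropriately (the square with horizontal arrows f : a → c, g : b → d and vertical arrows φ : a → b, ψ : c → d commutes). If open systems F ∈ Crl(b) and G ∈ Crl(d) are g-related (i.e., (F,G) ∈ Crl(g)), then φ*F and ψ*G are f-related, i.e., (φ*F, ψ*G) ∈ Crl(f). -/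
open Manifold

/-- Pullbacks by interconnection maps preserve relatedness of open systems: if the
square with horizontal maps `f : a → c`, `g : b → d` and vertical interconnection
morphisms `φ : a → b`, `ψ : c → d` commutes (`ψ ∘ f = g ∘ φ`), and open systems
`F ∈ Crl(b)`, `G ∈ Crl(d)` are `g`-related, then `φ*F` and `ψ*G` are `f`-related. -/
theorem pullback_preserves_relatedness
    {E₁ : Type*} [NormedAddCommGroup E₁] [NormedSpace ℝ E₁]
    {H₁ : Type*} [TopologicalSpace H₁] (I₁ : ModelWithCorners ℝ E₁ H₁)
    {Atot : Type*} [TopologicalSpace Atot] [ChartedSpace H₁ Atot]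
    {E₂ : Type*} [NormedAddCommGroup E₂] [NormedSpace ℝ E₂]
    {H₂ : Type*} [TopologicalSpace H₂] (I₂ : ModelWithCorners ℝ E₂ H₂)
    {Ast : Type*} [TopologicalSpace Ast] [ChartedSpace H₂ Ast]
    [IsManifold I₂ (⊤ : ℕ∞) Ast]
    {E₃ : Type*} [NormedAddCommGroup E₃] [NormedSpace ℝ E₃]
    {H₃ : Type*} [TopologicalSpace H₃] (I₃ : ModelWithCorners ℝ E₃ H₃)
    {Btot : Type*} [TopologicalSpace Btot] [ChartedSpace H₃ Btot]
    {E₄ : Type*} [NormedAddCommGroup E₄] [NormedSpace ℝ E₄]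
    {H₄ : Type*} [TopologicalSpace H₄] (I₄ : ModelWithCorners ℝ E₄ H₄)
    {Bst : Type*} [TopologicalSpace Bst] [ChartedSpace H₄ Bst]
    [IsManifold I₄ (⊤ : ℕ∞) Bst]
    {E₅ : Type*} [NormedAddCommGroup E₅] [NormedSpace ℝ E₅]
    {H₅ : Type*} [TopologicalSpace H₅] (I₅ : ModelWithCorners ℝ E₅ H₅)
    {Ctot : Type*} [TopologicalSpace Ctot] [ChartedSpace H₅ Ctot]
    {E₆ : Type*} [NormedAddCommGroup E₆] [NormedSpace ℝ E₆]
    {H₆ : Type*} [TopologicalSpace H₆] (I₆ : ModelWithCorners ℝ E₆ H₆)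
    {Cst : Type*} [TopologicalSpace Cst] [ChartedSpace H₆ Cst]
    [IsManifold I₆ (⊤ : ℕ∞) Cst]
    {E₇ : Type*} [NormedAddCommGroup E₇] [NormedSpace ℝ E₇]
    {H₇ : Type*} [TopologicalSpace H₇] (I₇ : ModelWithCorners ℝ E₇ H₇)
    {Dtot : Type*} [TopologicalSpace Dtot] [ChartedSpace H₇ Dtot]
    {E₈ : Type*} [NormedAddCommGroup E₈] [NormedSpace ℝ E₈]
    {H₈ : Type*} [TopologicalSpace H₈] (I₈ : ModelWithCorners ℝ E₈ H₈)
    {Dst : Type*} [TopologicalSpace Dst] [ChartedSpace H₈ Dst]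
    [IsManifold I₈ (⊤ : ℕ∞) Dst]
    -- the four surjective submersions
    (pa : Atot → Ast) (hpa : ContMDiff I₁ I₂ (⊤ : ℕ∞) pa) (hpas : Function.Surjective pa)
    (hpasub : ∀ q, Function.Surjective (mfderiv I₁ I₂ pa q))
    (pb : Btot → Bst) (hpb : ContMDiff I₃ I₄ (⊤ : ℕ∞) pb) (hpbs : Function.Surjective pb)
    (hpbsub : ∀ q, Function.Surjective (mfderiv I₃ I₄ pb q))
    (pc : Ctot → Cst) (hpc : ContMDiff I₅ I₆ (⊤ : ℕ∞) pc) (hpcs : Function.Surjective pc)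
    (hpcsub : ∀ q, Function.Surjective (mfderiv I₅ I₆ pc q))
    (pd : Dtot → Dst) (hpd : ContMDiff I₇ I₈ (⊤ : ℕ∞) pd) (hpds : Function.Surjective pd)
    (hpdsub : ∀ q, Function.Surjective (mfderiv I₇ I₈ pd q))
    -- the horizontal map `f : a → c`
    (ftot : Atot → Ctot) (fst : Ast → Cst)
    (hftot : ContMDiff I₁ I₅ (⊤ : ℕ∞) ftot) (hfst : ContMDiff I₂ I₆ (⊤ : ℕ∞) fst)
    (hfcomm : ∀ q : Atot, fst (pa q) = pc (ftot q))
    -- the horizontal map `g : b → d`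
    (gtot : Btot → Dtot) (gst : Bst → Dst)
    (hgtot : ContMDiff I₃ I₇ (⊤ : ℕ∞) gtot) (hgst : ContMDiff I₄ I₈ (⊤ : ℕ∞) gst)
    (hgcomm : ∀ r : Btot, gst (pb r) = pd (gtot r))
    -- the vertical interconnection morphism `φ : a → b`
    (φtot : Atot → Btot) (hφtot : ContMDiff I₁ I₃ (⊤ : ℕ∞) φtot)
    (φst : Diffeomorph I₂ I₄ Ast Bst (⊤ : ℕ∞))
    (hφcomm : ∀ q : Atot, φst (pa q) = pb (φtot q))
    -- the vertical interconnection morphism `ψ : c → d`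
    (ψtot : Ctot → Dtot) (hψtot : ContMDiff I₅ I₇ (⊤ : ℕ∞) ψtot)
    (ψst : Diffeomorph I₆ I₈ Cst Dst (⊤ : ℕ∞))
    (hψcomm : ∀ r : Ctot, ψst (pc r) = pd (ψtot r))
    -- the square commutes: `ψ ∘ f = g ∘ φ`
    (hsqtot : ∀ q : Atot, ψtot (ftot q) = gtot (φtot q))
    (hsqst : ∀ x : Ast, ψst (fst x) = gst (φst x))
    -- `g`-related open systems `F ∈ Crl(b)`, `G ∈ Crl(d)`
    (F : ∀ r : Btot, TangentSpace I₄ (pb r))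
    (G : ∀ s : Dtot, TangentSpace I₈ (pd s))
    (hFG : ∀ r : Btot, mfderiv I₄ I₈ gst (pb r) (F r) = G (gtot r)) :
    -- `φ*F` and `ψ*G` are `f`-related
    ∀ q : Atot,
      mfderiv I₂ I₆ fst (pa q)
        (mfderiv I₄ I₂ (φst.symm) (pb (φtot q)) (F (φtot q)))
      = mfderiv I₈ I₆ (ψst.symm) (pd (ψtot (ftot q))) (G (ψtot (ftot q))) := by
  intro q
  have hφd : MDifferentiableAt I₄ I₂ (φst.symm) (pb (φtot q)) :=
    (φst.symm.contMDiff.mdifferentiable (by simp)) _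
  have hψd : ∀ x, MDifferentiableAt I₈ I₆ (ψst.symm) x := fun x =>
    (ψst.symm.contMDiff.mdifferentiable (by simp)) x
  have hfd : ∀ x, MDifferentiableAt I₂ I₆ fst x := fun x =>
    (hfst.mdifferentiable (by simp)) x
  have hgd : ∀ x, MDifferentiableAt I₄ I₈ gst x := fun x =>
    (hgst.mdifferentiable (by simp)) x
  have hcomp : fst ∘ (φst.symm : Bst → Ast) = (ψst.symm : Dst → Cst) ∘ gst := by
    funext y
    apply ψst.toEquiv.injective
    show ψst (fst (φst.symm y)) = ψst (ψst.symm (gst y))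
    rw [hsqst, φst.apply_symm_apply, ψst.apply_symm_apply]
  set y := pb (φtot q) with hy
  have h1 : pa q = φst.symm y := by
    rw [hy, ← hφcomm q, φst.symm_apply_apply]
  have h2 : pd (ψtot (ftot q)) = gst y := by
    rw [hsqtot, ← hgcomm]
  have hG : G (ψtot (ftot q)) = mfderiv I₄ I₈ gst y (F (φtot q)) := by
    rw [hsqtot, ← hFG]
  have hL : mfderiv I₄ I₆ (fst ∘ (φst.symm : Bst → Ast)) y
      = (mfderiv I₂ I₆ fst (φst.symm y)).comp (mfderiv I₄ I₂ (φst.symm : Bst → Ast) y) :=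
    mfderiv_comp y (hfd _) hφd
  have hR : mfderiv I₄ I₆ ((ψst.symm : Dst → Cst) ∘ gst) y
      = (mfderiv I₈ I₆ (ψst.symm : Dst → Cst) (gst y)).comp (mfderiv I₄ I₈ gst y) :=
    mfderiv_comp y (hψd _) (hgd _)
  have key : (mfderiv I₂ I₆ fst (φst.symm y)).comp (mfderiv I₄ I₂ (φst.symm : Bst → Ast) y)
      = (mfderiv I₈ I₆ (ψst.symm : Dst → Cst) (gst y)).comp (mfderiv I₄ I₈ gst y) := by
    rw [← hL, ← hR, hcomp]
  rw [hG, h2, h1]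
  exact DFunLike.congr_fun key (F (φtot q))
end
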